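/- arXiv:2302.04357 — 2 statements merged into one kernel-verified Lean document; each statement's English description precedes it below -/
import Mathlib

section
/- Define H_init = {h_s}_{s∈ℕ} over ℕ by h_s(x) = 1 if φ_x halts on input x within s steps and 0 otherwise. Then Ldim(H_init) = ∞; i.e., for every n ∈ ℕ, Ldim(H_init) ≥ n. -/
open Classical

variable {X : Type*}

/-- A hypothesis `h` is consistent with a sample `S`. -/
def Consistent (h : X → Bool) (S : List (X × Bool)) : Prop :=
  ∀ p ∈ S, h p.1 = p.2

/-- A sample is realizable by the class `H`. -/
def Realizable (H : Set (X → Bool)) (S : List (X × Bool)) : Prop :=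
  ∃ h ∈ H, Consistent h S

/-- The version space `H_S`. -/
def VS (H : Set (X → Bool)) (S : List (X × Bool)) : Set (X → Bool) :=
  {h ∈ H | Consistent h S}

/-- `H^{(x,r)}`. -/
def Restrict (H : Set (X → Bool)) (x : X) (r : Bool) : Set (X → Bool) :=
  {h ∈ H | h x = r}

/-- `Shatters H d` holds iff there is a complete binary tree of depth `d` shattered by `H`,
equivalently stated recursively. -/
def Shatters (H : Set (X → Bool)) : ℕ → Prop
  | 0 => H.Nonempty
  | d + 1 => ∃ x : X, Shatters (Restrict H x false) d ∧ Shatters (Restrict H x true) d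

/-- Littlestone dimension, with `Ldim ∅ = ⊥` (playing the role of `-1`). -/
noncomputable def Ldim (H : Set (X → Bool)) : WithBot ℕ∞ :=
  ⨆ d ∈ {d : ℕ | Shatters H d}, ((d : ℕ∞) : WithBot ℕ∞)

def MistakesFrom (A : List (X × Bool) → X → Bool) :
    List (X × Bool) → List (X × Bool) → ℕ
  | _, [] => 0
  | pre, p :: rest =>
      (if A pre p.1 ≠ p.2 then 1 else 0) + MistakesFrom A (pre ++ [p]) rest

/-- Number of mistakes that the online learner `A` makes on the sample `S`. -/
def Mistakes (A : List (X × Bool) → X → Bool) (S : List (X × Bool)) : ℕ :=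
  MistakesFrom A [] S

/-- Mistake bound of `A` with respect to `H`. -/
noncomputable def MB (A : List (X × Bool) → X → Bool) (H : Set (X → Bool)) : ℕ∞ :=
  ⨆ S ∈ {S | Realizable H S}, (Mistakes A S : ℕ∞)

/-- `A` is an optimal online learner for `H`. -/
def IsOptimal (A : List (X × Bool) → X → Bool) (H : Set (X → Bool)) : Prop :=
  MB A H = ⨅ B : List (X × Bool) → X → Bool, MB B H

/-- Post-`S` mistake bound of `A` w.r.t. `H`. -/
noncomputable def PostMB (A : List (X × Bool) → X → Bool) (H : Set (X → Bool))
    (S : List (X × Bool)) : ℕ∞ :=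
  ⨆ S' ∈ {S' | Realizable H (S ++ S')}, ((Mistakes A (S ++ S') - Mistakes A S : ℕ) : ℕ∞)

/-- Optimal post-`S` mistake bound. -/
noncomputable def OptPostMB (H : Set (X → Bool)) (S : List (X × Bool)) : ℕ∞ :=
  ⨅ A : List (X × Bool) → X → Bool, PostMB A H S

/-- `A` is anytime optimal for `H`. -/
def AnytimeOptimal (A : List (X × Bool) → X → Bool) (H : Set (X → Bool)) : Prop :=
  ∀ S, Realizable H S → PostMB A H S = OptPostMB H S
/-- The `e`-th partial computable function in the standard numbering by codes. -/
def phi (e : ℕ) : ℕ →. ℕ :=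
  (Denumerable.ofNat Nat.Partrec.Code e).eval

/-- `φ_e(x)↓`. -/
def phiHalts (e x : ℕ) : Prop := (phi e x).Dom

/-- The {0,1}-valued learner induced by a two-place partial computable function:
it predicts `true` exactly when the output converges to `1`. -/
noncomputable def predOf (A : ℕ → ℕ →. ℕ) : List (ℕ × Bool) → ℕ → Bool :=
  fun S x => if 1 ∈ A (Encodable.encode S) x then true else false

/-- `A` is a computable online learner for `H`: a two-place partial computable function
converging with value in {0,1} on every (encoded `H`-realizable sample, point) pair. -/
def IsCOnlineLearner (A : ℕ → ℕ →. ℕ) (H : Set (ℕ → Bool)) : Prop :=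
  Partrec₂ A ∧
    ∀ S : List (ℕ × Bool), Realizable H S → ∀ x : ℕ,
      ∃ y ∈ A (Encodable.encode S) x, y = 0 ∨ y = 1

/-- The class `H_init = {h_s}`, where `h_s x = 1` iff `φ_x(x)` halts within `s` steps. -/
def Hinit : Set (ℕ → Bool) :=
  {h | ∃ s : ℕ, h = fun x =>
    (Nat.Partrec.Code.evaln s (Denumerable.ofNat Nat.Partrec.Code x) x).isSome}
namespace Stmt16Aux

open Nat.Partrec Nat.Partrec.Code

/-- The `s`-step threshold hypothesis. -/
def hfun (s : ℕ) : ℕ → Bool :=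
  fun x => (evaln s (Denumerable.ofNat Nat.Partrec.Code x) x).isSome

lemma hfun_mem (s : ℕ) : hfun s ∈ Hinit := ⟨s, rfl⟩

lemma hfun_mono {s t x : ℕ} (h : s ≤ t) (hx : hfun s x = true) : hfun t x = true := by
  rcases Option.isSome_iff_exists.1 hx with ⟨a, ha⟩
  exact Option.isSome_iff_exists.2 ⟨a, evaln_mono h ha⟩

lemma hfun_computable (n : ℕ) : Computable fun x : ℕ => hfun n x := by
  have h1 : Primrec fun x : ℕ => ((n, Denumerable.ofNat Nat.Partrec.Code x), x) :=
    ((Primrec.const n).pair (Primrec.ofNat _)).pair Primrec.id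
  exact (Primrec.option_isSome.comp (primrec_evaln.comp h1)).to_comp

lemma unbounded (n : ℕ) : ∃ x : ℕ, (phi x x).Dom ∧ hfun n x = false := by
  by_contra h
  push_neg at h
  set f : ℕ →. ℕ := fun x => cond (hfun n x) Part.none (Part.some 0) with hf
  have pf : Partrec f := by
    apply Partrec.cond (hfun_computable n) Partrec.none
    exact (Computable.const 0).partrec
  obtain ⟨c, hc⟩ := exists_code.1 (Partrec.nat_iff.1 pf)
  set e := Encodable.encode c with he
  have hofnat : Denumerable.ofNat Nat.Partrec.Code e = c := Denumerable.ofNat_encode c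
  have hphie : phi e e = f e := by rw [phi, hofnat, hc]
  by_cases hb : hfun n e = true
  · -- then φ_e(e) halts by soundness, but f e = none
    rcases Option.isSome_iff_exists.1 hb with ⟨a, ha⟩
    rw [hofnat] at ha
    have hdom : (phi e e).Dom := by
      rw [phi, hofnat]
      exact Part.dom_iff_mem.2 ⟨a, evaln_sound ha⟩
    rw [hphie] at hdom
    simp [hf, hb] at hdom
  · have hb' : hfun n e = false := by
      cases hx : hfun n e
      · rfl
      · exact absurd hx hb
    have hdom : (phi e e).Dom := by
      rw [hphie]; simp [hf, hb']
    exact (h e hdom) hb'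

open Classical in
/-- Halting time of `φ_x(x)`. -/
noncomputable def tOf (x : ℕ) : ℕ :=
  if h : ∃ s, hfun s x = true then Nat.find h else 0

lemma hfun_true_iff {x : ℕ} (hx : (phi x x).Dom) (s : ℕ) :
    hfun s x = true ↔ tOf x ≤ s := by
  have hex : ∃ s, hfun s x = true := by
    obtain ⟨a, ha⟩ := Part.dom_iff_mem.1 hx
    obtain ⟨k, hk⟩ := evaln_complete.1 ha
    exact ⟨k, Option.isSome_iff_exists.2 ⟨a, hk⟩⟩
  rw [tOf, dif_pos hex]
  constructor
  · intro h; exact Nat.find_le h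
  · intro h; exact hfun_mono h (Nat.find_spec hex)

/-- A point whose halting time exceeds `n`. -/
noncomputable def nxt (n : ℕ) : ℕ := (unbounded n).choose

lemma nxt_dom (n : ℕ) : (phi (nxt n) (nxt n)).Dom := (unbounded n).choose_spec.1

lemma nxt_t (n : ℕ) : n < tOf (nxt n) := by
  have h := (unbounded n).choose_spec.2
  by_contra hle
  push_neg at hle
  have := (hfun_true_iff (nxt_dom n) n).2 hle
  rw [nxt] at *
  simp [this] at h

/-- Sequence of points with strictly increasing halting times. -/
noncomputable def pt : ℕ → ℕ
  | 0 => nxt 0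
  | i + 1 => nxt (tOf (pt i))

noncomputable def τ (i : ℕ) : ℕ := tOf (pt i)

lemma pt_dom (i : ℕ) : (phi (pt i) (pt i)).Dom := by
  cases i <;> apply nxt_dom

lemma τ_strictMono : StrictMono τ :=
  strictMono_nat_of_lt_succ fun i => nxt_t (tOf (pt i))

lemma hfun_pt_iff (i s : ℕ) : hfun s (pt i) = true ↔ τ i ≤ s :=
  hfun_true_iff (pt_dom i) s

/-- Interval of threshold hypotheses. -/
def C (u v : ℕ) : Set (ℕ → Bool) := {h | ∃ s, u ≤ s ∧ s < v ∧ h = hfun s}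

lemma Shatters_mono {H H' : Set (ℕ → Bool)} (hs : H ⊆ H') :
    ∀ d, Shatters H d → Shatters H' d := by
  intro d
  induction d generalizing H H' with
  | zero => exact fun h => h.mono hs
  | succ d ih =>
    rintro ⟨x, h0, h1⟩
    refine ⟨x, ih ?_ h0, ih ?_ h1⟩ <;>
      exact fun h hh => ⟨hs hh.1, hh.2⟩

lemma shatters_C : ∀ (d lo : ℕ), Shatters (C (τ lo) (τ (lo + 2 ^ d))) d := by
  intro d
  induction d with
  | zero =>
    intro lo
    refine ⟨hfun (τ lo), τ lo, le_refl _, ?_, rfl⟩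
    exact τ_strictMono (by omega)
  | succ d ih =>
    intro lo
    refine ⟨pt (lo + 2 ^ d), ?_, ?_⟩
    · -- false branch: C (τ lo) (τ (lo + 2^d))
      refine Shatters_mono ?_ d (ih lo)
      rintro h ⟨s, h1, h2, rfl⟩
      refine ⟨⟨s, h1, ?_, rfl⟩, ?_⟩
      · calc s < τ (lo + 2 ^ d) := h2
          _ ≤ τ (lo + 2 ^ (d + 1)) := τ_strictMono.le_iff_le.2
            (by have := Nat.pow_le_pow_right (by norm_num : 1 ≤ 2) (Nat.le_succ d); omega)
      · rw [← Bool.not_eq_true, hfun_pt_iff (lo + 2 ^ d) s]; omega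
    · -- true branch: C (τ (lo + 2^d)) (τ (lo + 2^d + 2^d))
      have key : lo + 2 ^ d + 2 ^ d = lo + 2 ^ (d + 1) := by
        rw [pow_succ]; ring
      refine Shatters_mono ?_ d (ih (lo + 2 ^ d))
      rintro h ⟨s, h1, h2, rfl⟩
      rw [key] at h2
      exact ⟨⟨s, le_trans (τ_strictMono.le_iff_le.2 (Nat.le_add_right lo (2 ^ d))) h1, h2, rfl⟩,
        (hfun_pt_iff _ _).2 h1⟩

lemma shatters_Hinit (d : ℕ) : Shatters Hinit d := by
  refine Shatters_mono ?_ d (shatters_C d 0)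
  rintro h ⟨s, _, _, rfl⟩
  exact hfun_mem s

end Stmt16Aux

/-- `Ldim(H_init) = ∞`, i.e. `Ldim(H_init) ≥ n` for every `n`. -/
theorem stmt16 :
    Ldim Hinit = ⊤ ∧ ∀ n : ℕ, ((n : ℕ∞) : WithBot ℕ∞) ≤ Ldim Hinit := by
  have hle : ∀ n : ℕ, ((n : ℕ∞) : WithBot ℕ∞) ≤ Ldim Hinit := by
    intro n
    exact le_biSup (fun d : ℕ => ((d : ℕ∞) : WithBot ℕ∞)) (Stmt16Aux.shatters_Hinit n)
  refine ⟨?_, hle⟩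
  refine le_antisymm le_top ?_
  cases hL : Ldim Hinit with
  | bot =>
    have := hle 0
    rw [hL] at this
    simp at this
  | coe e =>
    have he : ∀ n : ℕ, (n : ℕ∞) ≤ e := by
      intro n
      have := hle n
      rw [hL] at this
      exact_mod_cast this
    cases e with
    | top => rfl
    | coe m =>
      have := he (m + 1)
      exact absurd (by exact_mod_cast this) (by omega)
end

section
/- For the class H^RER_halt = ∪_e {χ_{{3e}}} ∪ ∪_{e : φ_e(e)↓} {χ_{{3e,3e+1}}, χ_{{3e,3e+1,3e+2}}} over ℕ, there exists a computable online learner B with mistake bound M_B(H^RER_halt) = 2 = Ldim(H^RER_halt); i.e., H^RER_halt is optimally computably online learnable. -/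
open Classical

variable {X : Type*}

/-- The class `H^RER_halt = ∪_e {χ_{3e}} ∪ ∪_{e : φ_e(e)↓} {χ_{3e,3e+1}, χ_{3e,3e+1,3e+2}}`. -/
def HhaltRER : Set (ℕ → Bool) :=
  {f | ∃ e : ℕ, f = fun n => decide (n = 3 * e)} ∪
  {f | ∃ e : ℕ, phiHalts e e ∧
    (f = (fun n => decide (n = 3 * e ∨ n = 3 * e + 1)) ∨
     f = (fun n => decide (n = 3 * e ∨ n = 3 * e + 1 ∨ n = 3 * e + 2)))}

def myPred (S : List (ℕ × Bool)) (x : ℕ) : Bool :=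
  (decide ((x, true) ∈ S))
  || (decide ((x+1, true) ∈ S) && ((x+1)/3 == x/3))
  || (decide ((x+2, true) ∈ S) && ((x+2)/3 == x/3))
  || ((x % 3 == 1) && decide ((x-1, true) ∈ S) && !(decide ((x, false) ∈ S)))

theorem myPred_iff (S : List (ℕ × Bool)) (x : ℕ) :
    myPred S x = true ↔
      (∃ y, (y, true) ∈ S ∧ y / 3 = x / 3 ∧ x ≤ y) ∨
      (x % 3 = 1 ∧ (x - 1, true) ∈ S ∧ (x, false) ∉ S) := by
  simp only [myPred, Bool.or_eq_true, Bool.and_eq_true, decide_eq_true_eq, beq_iff_eq,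
    Bool.not_eq_true', decide_eq_false_iff_not]
  constructor
  · rintro (((h | ⟨h, hd⟩) | ⟨h, hd⟩) | ⟨⟨h1, h2⟩, h3⟩)
    · exact Or.inl ⟨x, h, rfl, le_refl x⟩
    · exact Or.inl ⟨x+1, h, hd, by omega⟩
    · exact Or.inl ⟨x+2, h, hd, by omega⟩
    · exact Or.inr ⟨h1, h2, h3⟩
  · rintro (⟨y, hy, hd, hle⟩ | ⟨h1, h2, h3⟩)
    · have : y = x ∨ y = x + 1 ∨ y = x + 2 := by omega
      rcases this with rfl | rfl | rfl
      · exact Or.inl (Or.inl (Or.inl hy))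
      · exact Or.inl (Or.inl (Or.inr ⟨hy, hd⟩))
      · exact Or.inl (Or.inr ⟨hy, hd⟩)
    · exact Or.inr ⟨⟨h1, h2⟩, h3⟩

theorem ind_mono (q : ℕ × Bool) (pre t : List (ℕ × Bool)) :
    (if q ∈ pre ++ t then (0:ℕ) else 1) ≤ (if q ∈ pre then (0:ℕ) else 1) := by
  by_cases hq : q ∈ pre
  · rw [if_pos hq, if_pos (List.mem_append_left t hq)]
  · rw [if_neg hq]; split <;> omega


theorem consistent_prefix {h : ℕ → Bool} {pre t : List (ℕ × Bool)}
    (hc : Consistent h (pre ++ t)) : Consistent h pre :=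
  fun q hq => hc q (List.mem_append_left t hq)


/-- Step lemma for `χ_{3e}`. -/
theorem step1 (e : ℕ) (pre : List (ℕ × Bool)) (p : ℕ × Bool)
    (hc : Consistent (fun n => decide (n = 3*e)) (pre ++ [p])) :
    (if myPred pre p.1 ≠ p.2 then 1 else 0)
      + ((if (3*e, true) ∈ pre ++ [p] then 0 else 1)
        + (if (3*e+1, false) ∈ pre ++ [p] then 0 else 1))
    ≤ (if (3*e, true) ∈ pre then 0 else 1) + (if (3*e+1, false) ∈ pre then 0 else 1) := by
  obtain ⟨x, b⟩ := p
  have hcp := consistent_prefix hc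
  have hb : decide (x = 3*e) = b := hc (x, b) (by simp)
  by_cases hm : myPred pre x = b
  · rw [if_neg (by simp [hm])]
    have i1 := ind_mono (3*e, true) pre [(x, b)]
    have i2 := ind_mono (3*e+1, false) pre [(x, b)]
    omega
  · rw [if_pos (by simp [hm])]
    cases b with
    | true =>
      have hx : x = 3*e := by simpa using hb
      subst hx
      have h1 : (3*e, true) ∉ pre := by
        intro hmem
        exact hm ((myPred_iff pre (3*e)).mpr (Or.inl ⟨3*e, hmem, rfl, le_refl _⟩))
      rw [if_neg h1, if_pos (by simp : (3*e, true) ∈ pre ++ [(3*e, true)])]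
      have := ind_mono (3*e+1, false) pre [(3*e, true)]
      omega
    | false =>
      have hx : x ≠ 3*e := by simpa using hb
      have hmt : myPred pre x = true := by
        cases hmm : myPred pre x
        · exact absurd hmm hm
        · rfl
      rcases (myPred_iff pre x).mp hmt with ⟨y, hy, hd, hle⟩ | ⟨h1, h2, h3⟩
      · have hye : y = 3*e := by simpa using hcp (y, true) hy
        omega
      · have hxe : x - 1 = 3*e := by simpa using hcp (x-1, true) h2
        have hx1 : x = 3*e + 1 := by omega
        subst hx1
        rw [if_neg h3, if_pos (by simp : (3*e+1, false) ∈ pre ++ [(3*e+1, false)])]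
        have := ind_mono (3*e, true) pre [(3*e+1, false)]
        omega

/-- Step lemma for `χ_{3e,3e+1}`. -/
theorem step2 (e : ℕ) (pre : List (ℕ × Bool)) (p : ℕ × Bool)
    (hc : Consistent (fun n => decide (n = 3*e ∨ n = 3*e+1)) (pre ++ [p])) :
    (if myPred pre p.1 ≠ p.2 then 1 else 0)
      + (if ((3*e, true) ∈ pre ++ [p] ∨ (3*e+1, true) ∈ pre ++ [p]) then 0 else 1)
    ≤ (if ((3*e, true) ∈ pre ∨ (3*e+1, true) ∈ pre) then 0 else 1) := by
  obtain ⟨x, b⟩ := p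
  have hcp := consistent_prefix hc
  have hb : decide (x = 3*e ∨ x = 3*e+1) = b := hc (x, b) (by simp)
  have imn : (if ((3*e, true) ∈ pre ++ [(x,b)] ∨ (3*e+1, true) ∈ pre ++ [(x,b)]) then (0:ℕ) else 1)
      ≤ (if ((3*e, true) ∈ pre ∨ (3*e+1, true) ∈ pre) then 0 else 1) := by
    by_cases hq : (3*e, true) ∈ pre ∨ (3*e+1, true) ∈ pre
    · have hq' : (3*e, true) ∈ pre ++ [(x,b)] ∨ (3*e+1, true) ∈ pre ++ [(x,b)] := by
        rcases hq with h | h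
        · exact Or.inl (List.mem_append_left _ h)
        · exact Or.inr (List.mem_append_left _ h)
      rw [if_pos hq, if_pos hq']
    · rw [if_neg hq]; split <;> omega
  by_cases hm : myPred pre x = b
  · rw [if_neg (by simp [hm])]
    omega
  · rw [if_pos (by simp [hm])]
    cases b with
    | true =>
      have hx : x = 3*e ∨ x = 3*e+1 := by simpa using hb
      -- show neither (3e,true) nor (3e+1,true) is in pre
      have h30 : (3*e, true) ∉ pre := by
        intro hmem
        apply hm
        rcases hx with rfl | rfl
        · exact (myPred_iff pre (3*e)).mpr (Or.inl ⟨3*e, hmem, rfl, le_refl _⟩)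
        · refine (myPred_iff pre (3*e+1)).mpr (Or.inr ⟨by omega, by simpa using hmem, ?_⟩)
          intro hmem'
          have := hc (3*e+1, false) (List.mem_append_left _ hmem')
          simp at this
      have h31 : (3*e+1, true) ∉ pre := by
        intro hmem
        apply hm
        exact (myPred_iff pre x).mpr (Or.inl ⟨3*e+1, hmem, by omega, by omega⟩)
      have hq' : (3*e, true) ∈ pre ++ [(x, true)] ∨ (3*e+1, true) ∈ pre ++ [(x, true)] := by
        rcases hx with rfl | rfl
        · exact Or.inl (by simp)
        · exact Or.inr (by simp)
      rw [if_pos hq', if_neg (by tauto)]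
    | false =>
      exfalso
      have hx : ¬(x = 3*e ∨ x = 3*e+1) := by simpa using hb
      have hmt : myPred pre x = true := by
        cases hmm : myPred pre x
        · exact absurd hmm hm
        · rfl
      rcases (myPred_iff pre x).mp hmt with ⟨y, hy, hd, hle⟩ | ⟨h1, h2, h3⟩
      · have hye : y = 3*e ∨ y = 3*e+1 := by simpa using hcp (y, true) hy
        omega
      · have hxe : x - 1 = 3*e ∨ x - 1 = 3*e+1 := by simpa using hcp (x-1, true) h2
        omega

/-- Step lemma for `χ_{3e,3e+1,3e+2}`. -/
theorem step3 (e : ℕ) (pre : List (ℕ × Bool)) (p : ℕ × Bool)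
    (hc : Consistent (fun n => decide (n = 3*e ∨ n = 3*e+1 ∨ n = 3*e+2)) (pre ++ [p])) :
    (if myPred pre p.1 ≠ p.2 then 1 else 0)
      + ((if ((3*e, true) ∈ pre ++ [p] ∨ (3*e+1, true) ∈ pre ++ [p] ∨ (3*e+2, true) ∈ pre ++ [p])
            then 0 else 1)
        + (if (3*e+2, true) ∈ pre ++ [p] then 0 else 1))
    ≤ (if ((3*e, true) ∈ pre ∨ (3*e+1, true) ∈ pre ∨ (3*e+2, true) ∈ pre) then 0 else 1)
      + (if (3*e+2, true) ∈ pre then 0 else 1) := by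
  obtain ⟨x, b⟩ := p
  have hcp := consistent_prefix hc
  have hb : decide (x = 3*e ∨ x = 3*e+1 ∨ x = 3*e+2) = b := hc (x, b) (by simp)
  have imono : (if ((3*e, true) ∈ pre ++ [(x,b)] ∨ (3*e+1, true) ∈ pre ++ [(x,b)]
        ∨ (3*e+2, true) ∈ pre ++ [(x,b)]) then (0:ℕ) else 1)
      ≤ (if ((3*e, true) ∈ pre ∨ (3*e+1, true) ∈ pre ∨ (3*e+2, true) ∈ pre) then 0 else 1) := by
    by_cases hq : (3*e, true) ∈ pre ∨ (3*e+1, true) ∈ pre ∨ (3*e+2, true) ∈ pre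
    · have hq' : (3*e, true) ∈ pre ++ [(x,b)] ∨ (3*e+1, true) ∈ pre ++ [(x,b)]
          ∨ (3*e+2, true) ∈ pre ++ [(x,b)] := by
        rcases hq with h | h | h
        · exact Or.inl (List.mem_append_left _ h)
        · exact Or.inr (Or.inl (List.mem_append_left _ h))
        · exact Or.inr (Or.inr (List.mem_append_left _ h))
      rw [if_pos hq, if_pos hq']
    · rw [if_neg hq]; split <;> omega
  have imono2 := ind_mono (3*e+2, true) pre [(x, b)]
  by_cases hm : myPred pre x = b
  · rw [if_neg (by simp [hm])]
    omega
  · rw [if_pos (by simp [hm])]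
    cases b with
    | false =>
      exfalso
      have hx : ¬(x = 3*e ∨ x = 3*e+1 ∨ x = 3*e+2) := by simpa using hb
      have hmt : myPred pre x = true := by
        cases hmm : myPred pre x
        · exact absurd hmm hm
        · rfl
      rcases (myPred_iff pre x).mp hmt with ⟨y, hy, hd, hle⟩ | ⟨h1, h2, h3⟩
      · have hye : y = 3*e ∨ y = 3*e+1 ∨ y = 3*e+2 := by simpa using hcp (y, true) hy
        omega
      · have hxe : x - 1 = 3*e ∨ x - 1 = 3*e+1 ∨ x - 1 = 3*e+2 := by
          simpa using hcp (x-1, true) h2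
        omega
    | true =>
      have hx : x = 3*e ∨ x = 3*e+1 ∨ x = 3*e+2 := by simpa using hb
      -- no true-labelled point ≥ x of the block is in pre
      have hA : ∀ y, y = 3*e ∨ y = 3*e+1 ∨ y = 3*e+2 → x ≤ y → (y, true) ∉ pre := by
        intro y hy hxy hmem
        exact hm ((myPred_iff pre x).mpr (Or.inl ⟨y, hmem, by omega, hxy⟩))
      rcases hx with rfl | rfl | rfl
      · -- x = 3e : nothing of the block is in pre
        have hn : ¬((3*e, true) ∈ pre ∨ (3*e+1, true) ∈ pre ∨ (3*e+2, true) ∈ pre) := by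
          push_neg
          exact ⟨hA (3*e) (by omega) (by omega), hA (3*e+1) (by omega) (by omega),
            hA (3*e+2) (by omega) (by omega)⟩
        have hp : (3*e, true) ∈ pre ++ [(3*e, true)] ∨ (3*e+1, true) ∈ pre ++ [(3*e, true)]
            ∨ (3*e+2, true) ∈ pre ++ [(3*e, true)] := Or.inl (by simp)
        rw [if_pos hp, if_neg hn]
        omega
      · -- x = 3e+1
        have h30 : (3*e, true) ∉ pre := by
          intro hmem
          apply hm
          refine (myPred_iff pre (3*e+1)).mpr (Or.inr ⟨by omega, by simpa using hmem, ?_⟩)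
          intro hmem'
          have := hc (3*e+1, false) (List.mem_append_left _ hmem')
          simp at this
        have hn : ¬((3*e, true) ∈ pre ∨ (3*e+1, true) ∈ pre ∨ (3*e+2, true) ∈ pre) := by
          push_neg
          exact ⟨h30, hA (3*e+1) (by omega) (by omega), hA (3*e+2) (by omega) (by omega)⟩
        have hp : (3*e, true) ∈ pre ++ [(3*e+1, true)] ∨ (3*e+1, true) ∈ pre ++ [(3*e+1, true)]
            ∨ (3*e+2, true) ∈ pre ++ [(3*e+1, true)] := Or.inr (Or.inl (by simp))
        rw [if_pos hp, if_neg hn]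
        omega
      · -- x = 3e+2
        have h32 : (3*e+2, true) ∉ pre := hA (3*e+2) (by omega) (by omega)
        have hp : (3*e, true) ∈ pre ++ [(3*e+2, true)] ∨ (3*e+1, true) ∈ pre ++ [(3*e+2, true)]
            ∨ (3*e+2, true) ∈ pre ++ [(3*e+2, true)] := Or.inr (Or.inr (by simp))
        rw [if_pos hp, if_pos (by simp : (3*e+2, true) ∈ pre ++ [(3*e+2, true)]), if_neg h32]
        omega

theorem mistakesFrom_le (P : List (X × Bool) → X → Bool) (h : X → Bool)
    (Φ : List (X × Bool) → ℕ)
    (step : ∀ pre p, Consistent h (pre ++ [p]) →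
      (if P pre p.1 ≠ p.2 then 1 else 0) + Φ (pre ++ [p]) ≤ Φ pre) :
    ∀ S pre, Consistent h (pre ++ S) → MistakesFrom P pre S ≤ Φ pre := by
  intro S
  induction S with
  | nil => intro pre _; simp [MistakesFrom]
  | cons p rest ih =>
    intro pre hc
    have hc' : Consistent h ((pre ++ [p]) ++ rest) := by
      simpa [List.append_assoc] using hc
    have hc1 : Consistent h (pre ++ [p]) := by
      intro q hq
      exact hc' q (by simp only [List.mem_append] at hq ⊢; tauto)
    calc MistakesFrom P pre (p :: rest)
        = (if P pre p.1 ≠ p.2 then 1 else 0) + MistakesFrom P (pre ++ [p]) rest := rfl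
      _ ≤ (if P pre p.1 ≠ p.2 then 1 else 0) + Φ (pre ++ [p]) :=
          Nat.add_le_add_left (ih _ hc') _
      _ ≤ Φ pre := step pre p hc1

def e₀ : ℕ := Encodable.encode Nat.Partrec.Code.zero

theorem halts0 : phiHalts e₀ e₀ := by
  simp [phi, phiHalts, e₀, Denumerable.ofNat_encode, Nat.Partrec.Code.eval]
  trivial

theorem shatters_mono {X : Type*} {H G : Set (X → Bool)} (hsub : H ⊆ G) :
    ∀ d, Shatters H d → Shatters G d := by
  intro d
  induction d generalizing H G with
  | zero => exact fun h => h.mono hsub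
  | succ d ih =>
    rintro ⟨x, hf, ht⟩
    exact ⟨x, ih (fun g hg => ⟨hsub hg.1, hg.2⟩) hf, ih (fun g hg => ⟨hsub hg.1, hg.2⟩) ht⟩

theorem shatters_succ {X : Type*} {H : Set (X → Bool)} {d : ℕ} (h : Shatters H (d+1)) :
    Shatters H d := by
  obtain ⟨x, hf, _⟩ := h
  exact shatters_mono (fun g hg => hg.1) d hf

theorem shatters_le {X : Type*} {H : Set (X → Bool)} {d d' : ℕ} (hle : d' ≤ d)
    (h : Shatters H d) : Shatters H d' := by
  induction d with
  | zero => simpa [Nat.le_zero.mp hle] using h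
  | succ d ih =>
    rcases Nat.lt_or_ge d' (d+1) with hlt | hge
    · exact ih (by omega) (shatters_succ h)
    · have : d' = d + 1 := by omega
      subst this; exact h

theorem mem1 (e : ℕ) : (fun n => decide (n = 3 * e)) ∈ HhaltRER := Or.inl ⟨e, rfl⟩
theorem mem2 : (fun n => decide (n = 3 * e₀ ∨ n = 3 * e₀ + 1)) ∈ HhaltRER :=
  Or.inr ⟨e₀, halts0, Or.inl rfl⟩
theorem mem3 : (fun n => decide (n = 3 * e₀ ∨ n = 3 * e₀ + 1 ∨ n = 3 * e₀ + 2)) ∈ HhaltRER :=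
  Or.inr ⟨e₀, halts0, Or.inr rfl⟩

theorem shatters2 : Shatters HhaltRER 2 := by
  refine ⟨3 * e₀ + 1, ⟨3 * e₀, ?_, ?_⟩, ⟨3 * e₀ + 2, ?_, ?_⟩⟩
  · refine ⟨_, ⟨⟨mem1 (e₀ + 1), ?_⟩, ?_⟩⟩ <;>
      first
      | (simp only [decide_eq_false_iff_not, decide_eq_true_eq] <;> omega)
      | simp
  · refine ⟨_, ⟨⟨mem1 e₀, ?_⟩, ?_⟩⟩ <;>
      first
      | (simp only [decide_eq_false_iff_not, decide_eq_true_eq] <;> omega)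
      | simp
  · refine ⟨_, ⟨⟨mem2, ?_⟩, ?_⟩⟩ <;>
      first
      | (simp only [decide_eq_false_iff_not, decide_eq_true_eq] <;> omega)
      | simp
  · refine ⟨_, ⟨⟨mem3, ?_⟩, ?_⟩⟩ <;>
      first
      | (simp only [decide_eq_false_iff_not, decide_eq_true_eq] <;> omega)
      | simp

theorem shatters1_two {X : Type*} {G : Set (X → Bool)} (h : Shatters G 1) :
    ∃ f ∈ G, ∃ g ∈ G, f ≠ g := by
  obtain ⟨x, ⟨f, hf, hfx⟩, ⟨g, hg, hgx⟩⟩ := h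
  exact ⟨f, hf, g, hg, fun he => by rw [he] at hfx; rw [hfx] at hgx; exact Bool.false_ne_true hgx⟩

theorem shatters2_four {X : Type*} {G : Set (X → Bool)} (h : Shatters G 2) :
    ∃ f1 ∈ G, ∃ f2 ∈ G, ∃ f3 ∈ G, ∃ f4 ∈ G,
      f1 ≠ f2 ∧ f1 ≠ f3 ∧ f1 ≠ f4 ∧ f2 ≠ f3 ∧ f2 ≠ f4 ∧ f3 ≠ f4 := by
  obtain ⟨x, hf, ht⟩ := h
  obtain ⟨f1, hf1, f2, hf2, h12⟩ := shatters1_two hf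
  obtain ⟨f3, hf3, f4, hf4, h34⟩ := shatters1_two ht
  have cross : ∀ f g, f ∈ Restrict G x false → g ∈ Restrict G x true → f ≠ g := by
    intro f g hf' hg' he
    have h1 := hf'.2
    rw [he, hg'.2] at h1
    exact Bool.noConfusion h1
  exact ⟨f1, hf1.1, f2, hf2.1, f3, hf3.1, f4, hf4.1, h12, cross _ _ hf1 hf3,
    cross _ _ hf1 hf4, cross _ _ hf2 hf3, cross _ _ hf2 hf4, h34⟩

theorem not_shatters3 : ¬ Shatters HhaltRER 3 := by
  rintro ⟨x, _, ht⟩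
  obtain ⟨f1, hf1, f2, hf2, f3, hf3, f4, hf4, h12, h13, h14, h23, h24, h34⟩ := shatters2_four ht
  -- every element of Restrict HhaltRER x true is one of three functions
  have key : ∀ f, f ∈ Restrict HhaltRER x true →
      f = (fun n => decide (n = 3 * (x/3))) ∨
      f = (fun n => decide (n = 3 * (x/3) ∨ n = 3 * (x/3) + 1)) ∨
      f = (fun n => decide (n = 3 * (x/3) ∨ n = 3 * (x/3) + 1 ∨ n = 3 * (x/3) + 2)) := by
    rintro f ⟨hH, hx⟩
    rcases hH with ⟨e, rfl⟩ | ⟨e, _, rfl | rfl⟩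
    · have : x = 3 * e := by simpa using hx
      have he : e = x / 3 := by omega
      subst he; exact Or.inl rfl
    · have : x = 3 * e ∨ x = 3 * e + 1 := by simpa using hx
      have he : e = x / 3 := by omega
      subst he; exact Or.inr (Or.inl rfl)
    · have : x = 3 * e ∨ x = 3 * e + 1 ∨ x = 3 * e + 2 := by simpa using hx
      have he : e = x / 3 := by omega
      subst he; exact Or.inr (Or.inr rfl)
  rcases key f1 hf1 with h1 | h1 | h1 <;> rcases key f2 hf2 with h2 | h2 | h2 <;>
    rcases key f3 hf3 with h3 | h3 | h3 <;> rcases key f4 hf4 with h4 | h4 | h4 <;>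
    first
      | exact h12 (h1.trans h2.symm)
      | exact h13 (h1.trans h3.symm)
      | exact h14 (h1.trans h4.symm)
      | exact h23 (h2.trans h3.symm)
      | exact h24 (h2.trans h4.symm)
      | exact h34 (h3.trans h4.symm)

theorem ldim_eq : Ldim HhaltRER = ((2 : ℕ∞) : WithBot ℕ∞) := by
  unfold Ldim
  apply le_antisymm
  · refine iSup₂_le fun d hd => ?_
    have hd2 : d ≤ 2 := by
      by_contra hcon
      exact not_shatters3 (shatters_le (by omega) hd)
    exact_mod_cast hd2
  · have := le_iSup₂ (f := fun (d : ℕ) (_ : d ∈ {d : ℕ | Shatters HhaltRER d}) =>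
      ((d : ℕ∞) : WithBot ℕ∞)) 2 shatters2
    exact_mod_cast this

-- membership is primrec
theorem mem_primrec : PrimrecRel (fun (a : ℕ × Bool) (l : List (ℕ × Bool)) => a ∈ l) := by
  have h : Primrec₂ (fun (a : ℕ × Bool) (l : List (ℕ × Bool)) => decide (@List.idxOf _ instBEqOfDecidableEq a l < l.length)) :=
    by
      obtain ⟨_, hp⟩ := Primrec.nat_lt.comp (Primrec.list_idxOf.comp (Primrec.fst (α := ℕ × Bool) (β := List (ℕ × Bool))) Primrec.snd)
        (Primrec.list_length.comp (Primrec.snd (α := ℕ × Bool) (β := List (ℕ × Bool))))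
      exact Primrec₂.mk (hp.of_eq fun p => by rw [decide_eq_decide])
  exact ⟨inferInstance, (h.of_eq fun a l => by simp [List.idxOf_lt_length_iff] :
    Primrec₂ fun (a : ℕ × Bool) (l : List (ℕ × Bool)) => decide (a ∈ l))⟩

theorem myPred_primrec : Primrec₂ myPred := by
  have hm : ∀ (f : List (ℕ × Bool) × ℕ → ℕ) (b : Bool), Primrec f →
      Primrec (fun p : List (ℕ × Bool) × ℕ => decide ((f p, b) ∈ p.1)) := fun f b hf =>
    by obtain ⟨_, hp⟩ := mem_primrec.comp (hf.pair (Primrec.const b)) Primrec.fst; convert hp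
  have hx : Primrec (fun p : List (ℕ × Bool) × ℕ => p.2) := Primrec.snd
  have d3 : Primrec₂ (fun (a b : ℕ) => (a / 3 == b / 3 : Bool)) :=
    Primrec.beq.comp₂ (Primrec.nat_div.comp₂ Primrec₂.left (Primrec₂.const 3))
      (Primrec.nat_div.comp₂ Primrec₂.right (Primrec₂.const 3))
  refine Primrec₂.of_eq ?_ (fun S x => rfl)
  exact Primrec.or.comp
    (Primrec.or.comp
      (Primrec.or.comp (hm _ true hx)
        (Primrec.and.comp (hm _ true (Primrec.nat_add.comp hx (Primrec.const 1)))
          (d3.comp (Primrec.nat_add.comp hx (Primrec.const 1)) hx)))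
      (Primrec.and.comp (hm _ true (Primrec.nat_add.comp hx (Primrec.const 2)))
        (d3.comp (Primrec.nat_add.comp hx (Primrec.const 2)) hx)))
    (Primrec.and.comp
      (Primrec.and.comp
        (Primrec.beq.comp (Primrec.nat_mod.comp hx (Primrec.const 3)) (Primrec.const 1))
        (hm _ true (Primrec.nat_sub.comp hx (Primrec.const 1))))
      (Primrec.not.comp (hm _ false hx)))


def gB : ℕ → ℕ → ℕ := fun c x =>
  cond (myPred ((Encodable.decode (α := List (ℕ × Bool)) c).getD []) x) 1 0

def Blearner : ℕ → ℕ →. ℕ := fun c x => Part.some (gB c x)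

theorem gB_primrec : Primrec₂ gB := by
  have hd : Primrec (fun c : ℕ => (Encodable.decode (α := List (ℕ × Bool)) c).getD []) :=
    Primrec.option_getD.comp Primrec.decode (Primrec.const [])
  exact Primrec.cond (myPred_primrec.comp (hd.comp Primrec.fst) Primrec.snd)
    (Primrec.const 1) (Primrec.const 0)

theorem Blearner_partrec : Partrec₂ Blearner :=
  (gB_primrec.to_comp).partrec₂

theorem predOf_B : predOf Blearner = myPred := by
  funext S x
  simp only [predOf, Blearner, gB, Part.mem_some_iff, Encodable.encodek, Option.getD_some]
  cases h : myPred S x <;> simp [h]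

theorem mistakes_le_two (h : ℕ → Bool) (hH : h ∈ HhaltRER) (S : List (ℕ × Bool))
    (hc : Consistent h S) : Mistakes myPred S ≤ 2 := by
  rcases hH with ⟨e, rfl⟩ | ⟨e, _, rfl | rfl⟩
  · have := mistakesFrom_le myPred _
      (fun pre => (if (3*e, true) ∈ pre then 0 else 1) + (if (3*e+1, false) ∈ pre then 0 else 1))
      (step1 e) S [] (by simpa using hc)
    simpa [Mistakes] using this
  · have := mistakesFrom_le myPred _
      (fun pre => if ((3*e, true) ∈ pre ∨ (3*e+1, true) ∈ pre) then 0 else 1)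
      (step2 e) S [] (by simpa using hc)
    simp [Mistakes] at this ⊢
    omega
  · have := mistakesFrom_le myPred _
      (fun pre => (if ((3*e, true) ∈ pre ∨ (3*e+1, true) ∈ pre ∨ (3*e+2, true) ∈ pre)
          then 0 else 1) + (if (3*e+2, true) ∈ pre then 0 else 1))
      (step3 e) S [] (by simpa using hc)
    simpa [Mistakes] using this

def S₀ : List (ℕ × Bool) := [(3 * e₀, true), (3 * e₀ + 2, true)]

theorem S₀_realizable : Realizable HhaltRER S₀ := by
  refine ⟨_, mem3, ?_⟩
  intro p hp
  simp only [S₀, List.mem_cons, List.not_mem_nil, or_false] at hp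
  rcases hp with rfl | rfl <;> simp

theorem myPred_nil (x : ℕ) : myPred [] x = false := by
  simp [myPred]

theorem myPred_second : myPred [(3 * e₀, true)] (3 * e₀ + 2) = false := by
  simp [myPred, Prod.ext_iff] <;> omega

theorem mistakes_S₀ : Mistakes myPred S₀ = 2 := by
  have h1 : myPred [] (3 * e₀) = false := myPred_nil _
  have h2 : myPred [(3 * e₀, true)] (3 * e₀ + 2) = false := myPred_second
  simp [Mistakes, S₀, MistakesFrom, h1, h2]

theorem MB_myPred : MB myPred HhaltRER = (2 : ℕ∞) := by
  unfold MB
  apply le_antisymm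
  · refine iSup₂_le fun S hS => ?_
    obtain ⟨h, hH, hc⟩ := hS
    have := mistakes_le_two h hH S hc
    exact_mod_cast this
  · have hle := le_iSup₂ (f := fun (S : List (ℕ × Bool))
        (_ : S ∈ {S | Realizable HhaltRER S}) => ((Mistakes myPred S : ℕ∞))) S₀ S₀_realizable
    rw [mistakes_S₀] at hle
    exact_mod_cast hle


/-- `Ldim(H^RER_halt) = 2` and there is a computable online learner for
`H^RER_halt` whose mistake bound is exactly 2; i.e. the class is optimally computably
online learnable. -/
theorem stmt19 :
    Ldim HhaltRER = ((2 : ℕ∞) : WithBot ℕ∞) ∧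
    ∃ B : ℕ → ℕ →. ℕ,
      IsCOnlineLearner B HhaltRER ∧ MB (predOf B) HhaltRER = (2 : ℕ∞) := by
  refine ⟨ldim_eq, Blearner, ⟨Blearner_partrec, ?_⟩, by rw [predOf_B]; exact MB_myPred⟩
  intro S _ x
  refine ⟨gB (Encodable.encode S) x, Part.mem_some _, ?_⟩
  unfold gB
  cases myPred ((Encodable.decode (α := List (ℕ × Bool)) (Encodable.encode S)).getD []) x <;>
    simp
end
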